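/- For all positive integers b and N with b dividing N and b ≤ N, there exist a set P of N distinct points, a set L of N/b distinct lines, and a set S of N distinct planes in R^3 such that each line of L contains exactly b points of P and is contained in exactly b planes of S, and the number of flags satisfies I(P, L, S) = bN. -/

import Mathlib

open scoped Classical
noncomputable section

/-- A line in `ℝ^3`: a nonempty affine subspace of dimension `1`. -/
def IsLine (ℓ : AffineSubspace ℝ (Fin 3 → ℝ)) : Prop :=
  (ℓ : Set (Fin 3 → ℝ)).Nonempty ∧ Module.finrank ℝ ℓ.direction = 1

/-- A plane in `ℝ^3`: a nonempty affine subspace of dimension `2`. -/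
def IsPlane (π : AffineSubspace ℝ (Fin 3 → ℝ)) : Prop :=
  (π : Set (Fin 3 → ℝ)).Nonempty ∧ Module.finrank ℝ π.direction = 2

/-- The number of flags `(p, ℓ, π)` with `p ∈ P`, `ℓ ∈ L`, `π ∈ S`, `p ∈ ℓ`, `ℓ ⊆ π`. -/
def flags3 (P : Finset (Fin 3 → ℝ)) (L S : Finset (AffineSubspace ℝ (Fin 3 → ℝ))) : ℕ :=
  Set.ncard {t : (Fin 3 → ℝ) × AffineSubspace ℝ (Fin 3 → ℝ) × AffineSubspace ℝ (Fin 3 → ℝ) |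
    t.1 ∈ P ∧ t.2.1 ∈ L ∧ t.2.2 ∈ S ∧ t.1 ∈ t.2.1 ∧ t.2.1 ≤ t.2.2}

namespace FlagsAux

def pt (i j : ℕ) : Fin 3 → ℝ := ![i, j, 0]
def v2 : Fin 3 → ℝ := ![0, 1, 0]
def wv (k : ℕ) : Fin 3 → ℝ := ![1, 0, (k : ℝ) + 1]

def lin (i : ℕ) : AffineSubspace ℝ (Fin 3 → ℝ) := AffineSubspace.mk' (pt i 0) (ℝ ∙ v2)
def pln (i k : ℕ) : AffineSubspace ℝ (Fin 3 → ℝ) :=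
  AffineSubspace.mk' (pt i 0) (Submodule.span ℝ {v2, wv k})

lemma mem_lin_iff {i : ℕ} {x : Fin 3 → ℝ} :
    x ∈ lin i ↔ x 0 = i ∧ x 2 = 0 := by
  rw [lin, AffineSubspace.mem_mk', Submodule.mem_span_singleton]
  constructor
  · rintro ⟨a, ha⟩
    have h0 := congrFun ha 0
    have h2 := congrFun ha 2
    simp [v2, pt] at h0 h2
    constructor <;> linarith
  · rintro ⟨h0, h2⟩
    refine ⟨x 1, ?_⟩
    funext j
    fin_cases j <;> simp [v2, pt, h0, h2]

lemma mem_pln_iff {i k : ℕ} {x : Fin 3 → ℝ} :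
    x ∈ pln i k ↔ x 2 = ((k : ℝ) + 1) * (x 0 - i) := by
  rw [pln, AffineSubspace.mem_mk', Submodule.mem_span_pair]
  constructor
  · rintro ⟨c, a, ha⟩
    have h0 := congrFun ha 0
    have h2 := congrFun ha 2
    simp [v2, wv, pt] at h0 h2
    rw [← h2, h0]
    ring
  · intro h
    refine ⟨x 1, x 0 - i, ?_⟩
    funext j
    fin_cases j <;> simp [v2, wv, pt] <;> linarith [h]

lemma pt_mem_lin {i j i' : ℕ} : pt i j ∈ lin i' ↔ i = i' := by
  rw [mem_lin_iff]
  simp [pt]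

lemma lin_le_pln {i i' k : ℕ} : lin i ≤ pln i' k ↔ i = i' := by
  constructor
  · intro h
    have h1 : pt i 0 ∈ lin i := pt_mem_lin.2 rfl
    have h2 := mem_pln_iff.1 (h h1)
    simp [pt] at h2
    have hk : ((k : ℝ) + 1) ≠ 0 := by positivity
    rcases h2 with h | h
    · exact absurd h hk
    · have : (i : ℝ) = i' := by linarith
      exact_mod_cast this
  · rintro rfl
    intro x hx
    rw [mem_lin_iff] at hx
    rw [mem_pln_iff, hx.1, hx.2]
    ring

lemma pt_inj : Function.Injective (fun q : ℕ × ℕ => pt q.1 q.2) := by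
  rintro ⟨i, j⟩ ⟨i', j'⟩ h
  have h0 := congrFun h 0
  have h1 := congrFun h 1
  simp [pt] at h0 h1
  exact Prod.ext (by exact_mod_cast h0) (by exact_mod_cast h1)

lemma lin_inj : Function.Injective lin := by
  intro i i' h
  have : pt i 0 ∈ lin i' := h ▸ pt_mem_lin.2 rfl
  exact pt_mem_lin.1 this

lemma pln_inj : Function.Injective (fun q : ℕ × ℕ => pln q.1 q.2) := by
  rintro ⟨i, k⟩ ⟨i', k'⟩ h
  simp only at h
  have hmem : ∀ x : Fin 3 → ℝ, x ∈ pln i k ↔ x ∈ pln i' k' := fun x => by rw [h]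
  have hi : i = i' := by
    have := (hmem (pt i 0)).1 (mem_pln_iff.2 (by simp [pt]))
    rw [mem_pln_iff] at this
    simp [pt] at this
    have hk : ((k' : ℝ) + 1) ≠ 0 := by positivity
    rcases this with h' | h'
    · exact absurd h' hk
    · have : (i : ℝ) = i' := by linarith
      exact_mod_cast this
  subst hi
  have hk : k = k' := by
    have hx : (![(i : ℝ) + 1, 0, (k : ℝ) + 1] : Fin 3 → ℝ) ∈ pln i k := by
      rw [mem_pln_iff]; simp
    have := (hmem _).1 hx
    rw [mem_pln_iff] at this
    simp at this
    exact_mod_cast this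
  rw [hk]

lemma isLine_lin (i : ℕ) : IsLine (lin i) := by
  constructor
  · exact ⟨pt i 0, AffineSubspace.self_mem_mk' _ _⟩
  · rw [lin, AffineSubspace.direction_mk']
    apply finrank_span_singleton
    intro h
    have := congrFun h 1
    simp [v2] at this

lemma isPlane_pln (i k : ℕ) : IsPlane (pln i k) := by
  constructor
  · exact ⟨pt i 0, AffineSubspace.self_mem_mk' _ _⟩
  · rw [pln, AffineSubspace.direction_mk']
    have hrange : ({v2, wv k} : Set (Fin 3 → ℝ)) = Set.range ![v2, wv k] := by
      ext x
      simp [Fin.exists_fin_two]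
      tauto
    have hli : LinearIndependent ℝ ![v2, wv k] := by
      rw [linearIndependent_fin2]
      constructor
      · intro h
        have := congrFun h 0
        simp [wv] at this
      · intro a h
        have h0 := congrFun h 0
        have h1 := congrFun h 1
        simp [v2, wv] at h0 h1
    rw [hrange, finrank_span_eq_card hli]
    simp

end FlagsAux

/-- For `b ∣ N`, `b ≤ N`, there are `N` points, `N/b` lines, and `N` planes such that each
line contains exactly `b` of the points and lies on exactly `b` of the planes, giving
exactly `bN` flags. -/
theorem flags_lower_bound_bN (b N : ℕ) (hb : 0 < b) (hN : 0 < N)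
    (hdvd : b ∣ N) (hbN : b ≤ N) :
    ∃ (P : Finset (Fin 3 → ℝ)) (L S : Finset (AffineSubspace ℝ (Fin 3 → ℝ))),
      P.card = N ∧ L.card = N / b ∧ S.card = N ∧
      (∀ ℓ ∈ L, IsLine ℓ) ∧ (∀ π ∈ S, IsPlane π) ∧
      (∀ ℓ ∈ L, (P.filter (fun p => p ∈ ℓ)).card = b ∧
        (S.filter (fun π => ℓ ≤ π)).card = b) ∧
      flags3 P L S = b * N := by
  classical
  set m := N / b with hm
  have hmb : m * b = N := Nat.div_mul_cancel hdvd
  set P : Finset (Fin 3 → ℝ) :=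
    ((Finset.range m) ×ˢ (Finset.range b)).image (fun q => FlagsAux.pt q.1 q.2) with hP
  set L : Finset (AffineSubspace ℝ (Fin 3 → ℝ)) := (Finset.range m).image FlagsAux.lin with hL
  set S : Finset (AffineSubspace ℝ (Fin 3 → ℝ)) :=
    ((Finset.range m) ×ˢ (Finset.range b)).image (fun q => FlagsAux.pln q.1 q.2) with hS
  have hPmem : ∀ x, x ∈ P ↔ ∃ i j, i < m ∧ j < b ∧ FlagsAux.pt i j = x := by
    intro x
    rw [hP, Finset.mem_image]
    constructor
    · rintro ⟨⟨i, j⟩, hq, rfl⟩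
      rw [Finset.mem_product, Finset.mem_range, Finset.mem_range] at hq
      exact ⟨i, j, hq.1, hq.2, rfl⟩
    · rintro ⟨i, j, h1, h2, rfl⟩
      exact ⟨(i, j), by
        rw [Finset.mem_product, Finset.mem_range, Finset.mem_range]; exact ⟨h1, h2⟩, rfl⟩
  have hSmem : ∀ x, x ∈ S ↔ ∃ i k, i < m ∧ k < b ∧ FlagsAux.pln i k = x := by
    intro x
    rw [hS, Finset.mem_image]
    constructor
    · rintro ⟨⟨i, k⟩, hq, rfl⟩
      rw [Finset.mem_product, Finset.mem_range, Finset.mem_range] at hq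
      exact ⟨i, k, hq.1, hq.2, rfl⟩
    · rintro ⟨i, k, h1, h2, rfl⟩
      exact ⟨(i, k), by
        rw [Finset.mem_product, Finset.mem_range, Finset.mem_range]; exact ⟨h1, h2⟩, rfl⟩
  have hLmem : ∀ x, x ∈ L ↔ ∃ i, i < m ∧ FlagsAux.lin i = x := by
    intro x
    rw [hL, Finset.mem_image]
    constructor
    · rintro ⟨i, hi, rfl⟩
      exact ⟨i, Finset.mem_range.1 hi, rfl⟩
    · rintro ⟨i, hi, rfl⟩
      exact ⟨i, Finset.mem_range.2 hi, rfl⟩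
  refine ⟨P, L, S, ?_, ?_, ?_, ?_, ?_, ?_, ?_⟩
  · rw [hP, Finset.card_image_of_injective _ FlagsAux.pt_inj]
    simp [hmb]
  · rw [hL, Finset.card_image_of_injective _ FlagsAux.lin_inj, Finset.card_range]
  · rw [hS, Finset.card_image_of_injective _ FlagsAux.pln_inj]
    simp [hmb]
  · intro ℓ hℓ
    obtain ⟨i, -, rfl⟩ := (hLmem ℓ).1 hℓ
    exact FlagsAux.isLine_lin i
  · intro π hπ
    rw [hS, Finset.mem_image] at hπ
    obtain ⟨q, -, rfl⟩ := hπ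
    exact FlagsAux.isPlane_pln q.1 q.2
  · intro ℓ hℓ
    obtain ⟨i, hi, rfl⟩ := (hLmem ℓ).1 hℓ
    constructor
    · have : P.filter (fun p => p ∈ FlagsAux.lin i) = (Finset.range b).image (FlagsAux.pt i) := by
        ext x
        rw [Finset.mem_filter, hPmem x, Finset.mem_image]
        constructor
        · rintro ⟨⟨i', j, hi', hj, rfl⟩, hmem⟩
          have : i' = i := FlagsAux.pt_mem_lin.1 hmem
          subst this
          exact ⟨j, Finset.mem_range.2 hj, rfl⟩
        · rintro ⟨j, hj, rfl⟩
          exact ⟨⟨i, j, hi, Finset.mem_range.1 hj, rfl⟩, FlagsAux.pt_mem_lin.2 rfl⟩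
      rw [this, Finset.card_image_of_injective, Finset.card_range]
      intro j j' h
      exact (Prod.ext_iff.1 (FlagsAux.pt_inj (a₁ := (i, j)) (a₂ := (i, j')) h)).2
    · have : S.filter (fun π => FlagsAux.lin i ≤ π) = (Finset.range b).image (FlagsAux.pln i) := by
        ext x
        rw [Finset.mem_filter, hSmem x, Finset.mem_image]
        constructor
        · rintro ⟨⟨i', k, hi', hk, rfl⟩, hle⟩
          have : i = i' := FlagsAux.lin_le_pln.1 hle
          subst this
          exact ⟨k, Finset.mem_range.2 hk, rfl⟩
        · rintro ⟨k, hk, rfl⟩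
          exact ⟨⟨i, k, hi, Finset.mem_range.1 hk, rfl⟩, FlagsAux.lin_le_pln.2 rfl⟩
      rw [this, Finset.card_image_of_injective, Finset.card_range]
      intro k k' h
      exact (Prod.ext_iff.1 (FlagsAux.pln_inj (a₁ := (i, k)) (a₂ := (i, k')) h)).2
  · set F : Finset ((Fin 3 → ℝ) × AffineSubspace ℝ (Fin 3 → ℝ) × AffineSubspace ℝ (Fin 3 → ℝ)) :=
      ((Finset.range m) ×ˢ ((Finset.range b) ×ˢ (Finset.range b))).image
        (fun q => (FlagsAux.pt q.1 q.2.1, FlagsAux.lin q.1, FlagsAux.pln q.1 q.2.2)) with hF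
    have hset : {t : (Fin 3 → ℝ) × AffineSubspace ℝ (Fin 3 → ℝ) × AffineSubspace ℝ (Fin 3 → ℝ) |
        t.1 ∈ P ∧ t.2.1 ∈ L ∧ t.2.2 ∈ S ∧ t.1 ∈ t.2.1 ∧ t.2.1 ≤ t.2.2} = ↑F := by
      ext ⟨p, ℓ, π⟩
      simp only [Set.mem_setOf_eq, Finset.mem_coe]
      constructor
      · rintro ⟨hp, hl, hs, hmem, hle⟩
        obtain ⟨i, hi, hlin⟩ := (hLmem ℓ).1 hl
        obtain ⟨i', j, hi', hj, hpt⟩ := (hPmem p).1 hp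
        obtain ⟨i'', k, hi'', hk, hpln⟩ := (hSmem π).1 hs
        have h1 : i' = i := by
          apply FlagsAux.pt_mem_lin.1
          rw [hpt, hlin]; exact hmem
        have h2 : i = i'' := by
          apply FlagsAux.lin_le_pln.1
          rw [hlin, hpln]; exact hle
        subst h1
        subst h2
        refine Finset.mem_image.2 ⟨(i', j, k), ?_, ?_⟩
        · rw [Finset.mem_product, Finset.mem_product]
          exact ⟨Finset.mem_range.2 hi, Finset.mem_range.2 hj, Finset.mem_range.2 hk⟩
        · simp only [Prod.mk.injEq]
          exact ⟨hpt, hlin, hpln⟩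
      · intro hmemF
        obtain ⟨⟨i, j, k⟩, hq, heq⟩ := Finset.mem_image.1 hmemF
        rw [Finset.mem_product, Finset.mem_product] at hq
        obtain ⟨hi, hj, hk⟩ := hq
        rw [Finset.mem_range] at hi hj hk
        simp only [Prod.mk.injEq] at heq
        obtain ⟨h1, h2, h3⟩ := heq
        subst h1; subst h2; subst h3
        exact ⟨(hPmem _).2 ⟨i, j, hi, hj, rfl⟩, (hLmem _).2 ⟨i, hi, rfl⟩,
          (hSmem _).2 ⟨i, k, hi, hk, rfl⟩, FlagsAux.pt_mem_lin.2 rfl, FlagsAux.lin_le_pln.2 rfl⟩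
    unfold flags3
    rw [hset, Set.ncard_coe_finset, hF, Finset.card_image_of_injective, Finset.card_product,
      Finset.card_product]
    · simp only [Finset.card_range]
      calc m * (b * b) = m * b * b := by ring
        _ = b * N := by rw [hmb]; ring
    · rintro ⟨i, j, k⟩ ⟨i', j', k'⟩ h
      simp only [Prod.mk.injEq] at h
      obtain ⟨h1, h2, h3⟩ := h
      have hij := FlagsAux.pt_inj (a₁ := (i, j)) (a₂ := (i', j')) h1
      have hi : i = i' := (Prod.ext_iff.1 hij).1
      have hj : j = j' := (Prod.ext_iff.1 hij).2
      have hk : k = k' := (Prod.ext_iff.1 (FlagsAux.pln_inj (a₁ := (i, k)) (a₂ := (i', k')) h3)).2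
      simp [hi, hj, hk]
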